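/- arXiv:1603.02368 — 2 statements merged into one kernel-verified Lean document; each statement's English description precedes it below -/
import Mathlib

section
/- Fix r ∈ (0,1). For each positive integer n, let θ_n be the unique angle in (0, π/2) satisfying (n+1)·cos θ_n + sin θ_n = n + r. Then there exists N such that for all n ≥ N, θ_n < √2·(n + r)^(−1/2). -/
open MeasureTheory

/-- Rotation of the plane by angle `θ`. -/
noncomputable def rot (θ : ℝ) (p : ℝ × ℝ) : ℝ × ℝ :=
  (Real.cos θ * p.1 - Real.sin θ * p.2, Real.sin θ * p.1 + Real.cos θ * p.2)

/-- A unit square in `ℝ²`: the image of `[0,1] × [0,1]` under a rigid motion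
(a rotation composed with a translation). -/
def IsUnitSquare (S : Set (ℝ × ℝ)) : Prop :=
  ∃ θ : ℝ, ∃ v : ℝ × ℝ,
    S = (fun p => v + rot θ p) '' (Set.Icc (0:ℝ) 1 ×ˢ Set.Icc (0:ℝ) 1)

/-- A finite family of unit squares with pairwise disjoint interiors, each contained in `A`. -/
def IsPacking (A : Set (ℝ × ℝ)) (F : Finset (Set (ℝ × ℝ))) : Prop :=
  (∀ S ∈ F, IsUnitSquare S ∧ S ⊆ A) ∧
  (∀ S ∈ F, ∀ T ∈ F, S ≠ T → interior S ∩ interior T = ∅)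

/-- The packing waste `W(A)`: the area of `A` minus the supremum of the total area
covered by a finite family of non-overlapping unit squares packed into `A`. -/
noncomputable def packingWaste (A : Set (ℝ × ℝ)) : ℝ :=
  (volume A).toReal -
    sSup {t : ℝ | ∃ F : Finset (Set (ℝ × ℝ)), IsPacking A F ∧
      t = (volume (⋃ S ∈ F, S)).toReal}

/-- A finite family of unit squares whose union contains `A`. -/
def IsCovering (A : Set (ℝ × ℝ)) (F : Finset (Set (ℝ × ℝ))) : Prop :=
  (∀ S ∈ F, IsUnitSquare S) ∧ A ⊆ ⋃ S ∈ F, S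

/-- The covering waste `W'(A)`: the infimum of the number of unit squares in a finite
family covering `A`, minus the area of `A`. -/
noncomputable def coveringWaste (A : Set (ℝ × ℝ)) : ℝ :=
  sInf {t : ℝ | ∃ F : Finset (Set (ℝ × ℝ)), IsCovering A F ∧ t = (F.card : ℝ)} -
    (volume A).toReal

set_option maxHeartbeats 1000000 in
theorem packing_angle_eventually_lt (r : ℝ) (hr : r ∈ Set.Ioo (0:ℝ) 1) (θ : ℕ → ℝ)
    (hθ : ∀ n : ℕ, 0 < n → θ n ∈ Set.Ioo 0 (Real.pi / 2) ∧
      ((n : ℝ) + 1) * Real.cos (θ n) + Real.sin (θ n) = (n : ℝ) + r) :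
    ∃ N : ℕ, ∀ n ≥ N, θ n < Real.sqrt 2 * ((n : ℝ) + r) ^ (-(1:ℝ)/2) := by
  obtain ⟨hr0, hr1⟩ := hr
  refine ⟨⌈8 / r ^ 2⌉₊ + 1, fun n hn => ?_⟩
  have hn1 : 1 ≤ n := le_trans (Nat.le_add_left 1 _) hn
  obtain ⟨⟨hφ0, hφπ⟩, heq⟩ := hθ n hn1
  obtain ⟨φ, hφdef⟩ : ∃ φ : ℝ, φ = θ n := ⟨_, rfl⟩
  obtain ⟨m, hmdef⟩ : ∃ m : ℝ, m = (n : ℝ) + r := ⟨_, rfl⟩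
  rw [← hφdef] at hφ0 hφπ
  rw [← hφdef, ← hmdef] at heq
  -- m > 8 / r^2
  have hnn : (8 / r ^ 2 : ℝ) ≤ (n : ℝ) := by
    calc (8 / r ^ 2 : ℝ) ≤ (⌈8 / r ^ 2⌉₊ : ℝ) := Nat.le_ceil _
    _ ≤ (n : ℝ) := by exact_mod_cast Nat.le_of_succ_le hn
  have hm0 : (0:ℝ) < m := by rw [hmdef]; positivity
  have hmr : 8 / r ^ 2 < m := by rw [hmdef]; linarith
  have hm8 : (8:ℝ) < m := by
    have : (8:ℝ) < 8 / r ^ 2 := by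
      rw [lt_div_iff₀ (by positivity)]
      nlinarith
    linarith
  obtain ⟨t, htdef⟩ : ∃ t : ℝ, t = Real.sqrt (2 / m) := ⟨_, rfl⟩
  have ht0 : 0 < t := htdef ▸ Real.sqrt_pos.mpr (by positivity)
  have ht2 : t ^ 2 = 2 / m := htdef ▸ Real.sq_sqrt (by positivity)
  have hmt2 : m * t ^ 2 = 2 := by rw [ht2]; field_simp
  -- rewrite the goal threshold as t
  have hform : Real.sqrt 2 * ((n : ℝ) + r) ^ (-(1:ℝ)/2) = t := by
    rw [htdef, ← hmdef, Real.sqrt_div (by norm_num : (0:ℝ) ≤ 2),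
      show (-(1:ℝ)/2) = -(1/2) by ring, Real.rpow_neg hm0.le,
      ← Real.sqrt_eq_rpow, div_eq_mul_inv]
  rw [hform, ← hφdef]
  -- t < r/2
  have htr : t < r / 2 := by
    have h1 : t ^ 2 < (r / 2) ^ 2 := by
      rw [ht2, div_lt_iff₀ hm0]
      rw [div_lt_iff₀ (by positivity)] at hmr
      nlinarith
    nlinarith
  have ht1 : t < 1 / 2 := by linarith
  -- 1 ≤ (n+1) * sin t
  have hmn : m < (n : ℝ) + 1 := by rw [hmdef]; linarith
  have hst : t - t ^ 3 / 4 < Real.sin t := by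
    have := Real.sin_gt_sub_cube ht0
    linarith [pow_pos ht0 3]
  have hst' : 3 / 4 * t < Real.sin t := by nlinarith
  have hmt : 4 < m * t := by nlinarith [sq_nonneg (m * t - 4), mul_pos hm0 ht0]
  have hsin1 : 1 ≤ ((n : ℝ) + 1) * Real.sin t := by
    have h1 : m * (3 / 4 * t) ≤ ((n : ℝ) + 1) * Real.sin t :=
      mul_le_mul hmn.le hst'.le (by positivity) (by positivity)
    have h3 : m * (3 / 4 * t) = 3 / 4 * (m * t) := by ring
    linarith
  -- f(t) < m
  have hcosb : Real.cos t ≤ 1 - t ^ 2 / 2 + t ^ 4 * (5 / 96) := by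
    have h5 := Real.cos_bound (x := t) (by rw [abs_of_pos ht0]; linarith)
    rw [abs_of_pos ht0] at h5
    have h6 := abs_le.mp h5
    linarith [h6.2]
  have hsinle : Real.sin t ≤ t := Real.sin_le ht0.le
  have ht2b : t ^ 2 < r / 4 := by
    have h8 : t * t < (r / 2) * (r / 2) := mul_lt_mul' htr.le htr ht0.le (by linarith)
    have h9 : 0 ≤ r * (1 - r) := mul_nonneg hr0.le (by linarith)
    nlinarith
  have ht4b : t ^ 4 < r / 16 := by
    have h4 : t ^ 2 * t ^ 2 < (r / 4) * (r / 4) :=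
      mul_lt_mul' ht2b.le ht2b (by positivity) (by positivity)
    nlinarith
  have hft : ((n : ℝ) + 1) * Real.cos t + Real.sin t < m := by
    have hn1' : (n : ℝ) + 1 = m + (1 - r) := by rw [hmdef]; ring
    have hc' : ((n : ℝ) + 1) * Real.cos t ≤ ((n : ℝ) + 1) * (1 - t ^ 2 / 2 + t ^ 4 * (5 / 96)) :=
      mul_le_mul_of_nonneg_left hcosb (by positivity)
    have e1 : ((n : ℝ) + 1) * (1 - t ^ 2 / 2 + t ^ 4 * (5 / 96)) + t =
        m + (-1 + 5 / 48 * t ^ 2 + (1 - r) * (1 - t ^ 2 / 2 + t ^ 4 * (5 / 96)) + t) := by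
      rw [hn1']
      linear_combination ((5 / 96) * t ^ 2 - 1 / 2) * hmt2
    have hres : -1 + 5 / 48 * t ^ 2 + (1 - r) * (1 - t ^ 2 / 2 + t ^ 4 * (5 / 96)) + t < 0 := by
      nlinarith [mul_nonneg (sub_nonneg.mpr hr1.le) (sq_nonneg t),
        mul_nonneg hr0.le (pow_nonneg ht0.le 4), ht2b, ht4b, htr]
    linarith
  -- suppose t ≤ φ; derive contradiction
  by_contra hcon
  push_neg at hcon
  have htφ : t ≤ φ := hcon
  have hb0 : 0 ≤ Real.sin ((φ - t) / 2) := Real.sin_nonneg_of_nonneg_of_le_pi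
    (by linarith) (by nlinarith [Real.pi_gt_three])
  have hsa : Real.sin t ≤ Real.sin ((φ + t) / 2) := by
    apply Real.strictMonoOn_sin.monotoneOn
    · constructor
      · nlinarith [Real.pi_gt_three]
      · nlinarith [Real.pi_gt_three]
    · constructor
      · nlinarith [Real.pi_gt_three]
      · linarith
    · linarith
  have hca : Real.cos ((φ + t) / 2) ≤ 1 := Real.cos_le_one _
  have hbr : Real.cos ((φ + t) / 2) ≤ ((n : ℝ) + 1) * Real.sin ((φ + t) / 2) := by
    have h7 : ((n : ℝ) + 1) * Real.sin t ≤ ((n : ℝ) + 1) * Real.sin ((φ + t) / 2) :=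
      mul_le_mul_of_nonneg_left hsa (by positivity)
    linarith
  have hkey : ((n : ℝ) + 1) * (Real.cos φ - Real.cos t) + (Real.sin φ - Real.sin t) ≤ 0 := by
    rw [Real.cos_sub_cos, Real.sin_sub_sin]
    nlinarith [mul_nonneg hb0 (sub_nonneg.mpr hbr)]
  linarith [heq, hkey, hft]
end

section
/- Fix r ∈ (0,1). For each positive integer n, let θ'_n be the unique angle in (0, π/2) satisfying (n+1)·cos θ'_n − sin θ'_n = n + r. Then there exists N such that for all n ≥ N, θ'_n < √2·(n + r)^(−1/2). -/
open MeasureTheory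

set_option maxHeartbeats 1000000 in
theorem covering_angle_eventually_lt (r : ℝ) (hr : r ∈ Set.Ioo (0:ℝ) 1) (θ' : ℕ → ℝ)
    (hθ' : ∀ n : ℕ, 0 < n → θ' n ∈ Set.Ioo 0 (Real.pi / 2) ∧
      ((n : ℝ) + 1) * Real.cos (θ' n) - Real.sin (θ' n) = (n : ℝ) + r) :
    ∃ N : ℕ, ∀ n ≥ N, θ' n < Real.sqrt 2 * ((n : ℝ) + r) ^ (-(1:ℝ)/2) := by
  obtain ⟨hr0, hr1⟩ := hr
  refine ⟨2, fun n hn => ?_⟩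
  have hn0 : 0 < n := by omega
  obtain ⟨⟨hθ0, hθπ⟩, heq⟩ := hθ' n hn0
  set x : ℝ := (n : ℝ) + r with hx
  have hn2 : (2:ℝ) ≤ (n:ℝ) := by exact_mod_cast hn
  have hx2 : (2:ℝ) ≤ x := by simp [hx]; linarith
  have hx0 : 0 < x := by linarith
  set t : ℝ := Real.sqrt 2 * x ^ (-(1:ℝ)/2) with ht
  have htval : t = Real.sqrt 2 / Real.sqrt x := by
    rw [ht, neg_div, Real.rpow_neg hx0.le, ← Real.sqrt_eq_rpow]
    ring
  have ht0 : 0 < t := by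
    rw [htval]; positivity
  have ht2 : t ^ 2 = 2 / x := by
    rw [htval, div_pow, Real.sq_sqrt (by norm_num : (0:ℝ) ≤ 2), Real.sq_sqrt hx0.le]
  have ht2' : t ^ 2 * x = 2 := by
    rw [ht2]; field_simp
  have ht2le : t ^ 2 ≤ 1 := by
    rw [ht2, div_le_one hx0]; linarith
  have ht1 : t ≤ 1 := by nlinarith
  -- Taylor bounds at t
  have hcos : Real.cos t ≤ 1 - t ^ 2 / 2 + t ^ 4 * (5 / 96) := by
    have hb := Real.cos_bound (x := t) (by rw [abs_of_pos ht0]; exact ht1)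
    rw [abs_of_pos ht0] at hb
    have := abs_le.1 hb
    linarith [this.2]
  have hsin : t - t ^ 3 / 4 < Real.sin t := by
    have := Real.sin_gt_sub_cube ht0
    linarith [pow_pos ht0 3]
  have hn1x : ((n:ℝ) + 1) ≤ (3/2) * x := by simp [hx]; nlinarith
  have hxn1 : x ≤ (n:ℝ) + 1 := by simp [hx]; linarith
  -- error term bound
  have hE : ((n:ℝ) + 1) * (t ^ 4 * (5 / 96)) + t ^ 3 / 4 ≤ t := by
    have h3 : t ^ 3 ≤ t ^ 2 := by nlinarith
    have h4 : ((n:ℝ) + 1) * t ^ 3 ≤ 3 := by nlinarith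
    nlinarith [mul_pos ht0 ht0]
  -- main estimate: f(t) < x
  have hmain : ((n:ℝ) + 1) * Real.cos t - Real.sin t < x := by
    have hA : ((n:ℝ) + 1) * (1 - t ^ 2 / 2) ≤ (n:ℝ) := by
      nlinarith [mul_le_mul_of_nonneg_right hxn1 (sq_nonneg t), ht2']
    have hpos : (0:ℝ) ≤ (n:ℝ) + 1 := by positivity
    have hB := mul_le_mul_of_nonneg_left hcos hpos
    have hC : ((n:ℝ) + 1) * (1 - t ^ 2 / 2 + t ^ 4 * (5 / 96)) =
        ((n:ℝ) + 1) * (1 - t ^ 2 / 2) + ((n:ℝ) + 1) * (t ^ 4 * (5 / 96)) := by ring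
    linarith
  -- conclude by monotonicity
  by_contra hcon
  push_neg at hcon
  have htθ : t ≤ θ' n := hcon
  have hπ2 : (1:ℝ) ≤ Real.pi / 2 := by linarith [Real.pi_gt_three]
  have hcosm : Real.cos (θ' n) ≤ Real.cos t :=
    Real.cos_le_cos_of_nonneg_of_le_pi ht0.le (by linarith [Real.pi_pos]) htθ
  have hsinm : Real.sin t ≤ Real.sin (θ' n) :=
    Real.sin_le_sin_of_le_of_le_pi_div_two (by linarith) hθπ.le htθ
  have hpos : (0:ℝ) ≤ (n:ℝ) + 1 := by positivity
  linarith [mul_le_mul_of_nonneg_left hcosm hpos]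
end
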